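/- Let α, β, γ > 0 with α ≥ min(β,γ)/2, and suppose V_ℓ ≤ c·2^{-βℓ} and C_ℓ ≤ c·2^{γℓ} for all ℓ ≥ 0 and some constant c > 0. For ε ∈ (0,1) set L = ⌈log₂(1/ε)/α⌉ and M_ℓ = ⌈ε^{-2} √(V_ℓ/C_ℓ) Σ_{j=0}^L √(V_j C_j)⌉. Then Σ_{ℓ=0}^L M_ℓ C_ℓ ≤ C(ε^{-2} + ε^{-γ/α}) when β > γ, ≤ C(L² ε^{-2} + ε^{-γ/α}) when β = γ, and ≤ C ε^{-2-(γ-β)/α} when β < γ, for a constant C independent of ε. -/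

import Mathlib

lemma my_geom_lt_one {q : ℝ} (h0 : 0 ≤ q) (h1 : q < 1) (n : ℕ) :
    ∑ j ∈ Finset.range n, q ^ j ≤ 1 / (1 - q) := by
  rw [geom_sum_eq (by linarith : q ≠ 1)]
  have hqn : 0 ≤ q ^ n := pow_nonneg h0 n
  have heq : (q ^ n - 1) / (q - 1) = (1 - q ^ n) / (1 - q) := by
    rw [div_eq_div_iff (by linarith) (by linarith)]; ring
  rw [heq]
  gcongr
  · linarith

lemma my_geom_gt_one {q : ℝ} (h1 : 1 < q) (L : ℕ) :
    ∑ j ∈ Finset.range (L + 1), q ^ j ≤ q / (q - 1) * q ^ L := by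
  rw [geom_sum_eq (by linarith : q ≠ 1)]
  have h : (q ^ (L+1) - 1) / (q - 1) ≤ q ^ (L+1) / (q - 1) := by
    gcongr <;> linarith
  refine h.trans_eq ?_
  rw [pow_succ]; ring

lemma my_two_rpow_L_bound (α δ ε : ℝ) (L : ℕ) (hα : 0 < α) (hδ : 0 ≤ δ)
    (hε : 0 < ε) (hε1 : ε < 1) (hL : (L : ℝ) ≤ Real.logb 2 (1 / ε) / α + 1) :
    ((2:ℝ) ^ δ) ^ L ≤ 2 ^ δ * ε ^ (-(δ / α)) := by
  have h2 : (0:ℝ) < 2 := by norm_num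
  have hstep : ((2:ℝ) ^ δ) ^ L = (2:ℝ) ^ (δ * L) := by
    rw [← Real.rpow_natCast ((2:ℝ) ^ δ) L, ← Real.rpow_mul (by norm_num)]
  rw [hstep]
  have hmono : (2:ℝ) ^ (δ * L) ≤ (2:ℝ) ^ (δ * (Real.logb 2 (1/ε) / α + 1)) :=
    Real.rpow_le_rpow_of_exponent_le (by norm_num) (mul_le_mul_of_nonneg_left hL hδ)
  refine hmono.trans_eq ?_
  have h1ε : (0:ℝ) < 1 / ε := by positivity
  have key : (2:ℝ) ^ (Real.logb 2 (1/ε) * (δ/α)) = ε ^ (-(δ / α)) := by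
    rw [Real.rpow_mul (by norm_num), Real.rpow_logb h2 (by norm_num) h1ε,
      one_div, Real.inv_rpow hε.le, ← Real.rpow_neg hε.le]
  calc (2:ℝ) ^ (δ * (Real.logb 2 (1/ε) / α + 1))
      = (2:ℝ) ^ δ * (2:ℝ) ^ (Real.logb 2 (1/ε) * (δ/α)) := by
        rw [← Real.rpow_add h2]; congr 1; ring
    _ = 2 ^ δ * ε ^ (-(δ / α)) := by rw [key]

lemma mlmc_main (α β γ c : ℝ) (hα : 0 < α) (hγ : 0 < γ) (hc : 0 < c)
    (V C : ℕ → ℝ) (hVpos : ∀ ℓ, 0 < V ℓ) (hCpos : ∀ ℓ, 0 < C ℓ)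
    (hV : ∀ ℓ : ℕ, V ℓ ≤ c * 2 ^ (-β * ℓ)) (hC : ∀ ℓ : ℕ, C ℓ ≤ c * 2 ^ (γ * ℓ))
    (ε : ℝ) (hε : 0 < ε) (hε1 : ε < 1)
    (L : ℕ) (hL : L = ⌈Real.logb 2 (1 / ε) / α⌉₊)
    (M : ℕ → ℕ)
    (hM : ∀ ℓ, M ℓ = ⌈ε ^ (-2 : ℝ) * Real.sqrt (V ℓ / C ℓ) *
    ∑ j ∈ Finset.range (L + 1), Real.sqrt (V j * C j)⌉₊) :
    1 ≤ L ∧ (L : ℝ) ≤ Real.logb 2 (1 / ε) / α + 1 ∧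
    ∑ ℓ ∈ Finset.range (L + 1), (M ℓ : ℝ) * C ℓ ≤
      ε ^ (-2:ℝ) * (c * ∑ j ∈ Finset.range (L + 1), ((2:ℝ) ^ ((γ - β)/2)) ^ j) ^ 2
      + c * ((2:ℝ) ^ γ / ((2:ℝ) ^ γ - 1)) * ((2:ℝ) ^ γ * ε ^ (-(γ / α))) := by
  have h2 : (0:ℝ) < 2 := by norm_num
  have h1ε : 1 < 1 / ε := by rw [lt_div_iff₀ hε]; linarith
  have hlogpos : 0 < Real.logb 2 (1 / ε) := Real.logb_pos one_lt_two h1ε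
  have hxpos : 0 < Real.logb 2 (1 / ε) / α := div_pos hlogpos hα
  have hL1 : 1 ≤ L := by rw [hL]; exact Nat.ceil_pos.mpr hxpos
  have hLle : (L : ℝ) ≤ Real.logb 2 (1 / ε) / α + 1 := by
    rw [hL]; exact (Nat.ceil_lt_add_one hxpos.le).le
  refine ⟨hL1, hLle, ?_⟩
  set q : ℝ := (2:ℝ) ^ ((γ - β)/2) with hqdef
  set S : ℝ := ∑ j ∈ Finset.range (L + 1), Real.sqrt (V j * C j) with hSdef
  have hSnn : 0 ≤ S := Finset.sum_nonneg fun j _ => Real.sqrt_nonneg _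
  have hqpos : 0 < q := Real.rpow_pos_of_pos h2 _
  -- sqrt(V_j C_j) ≤ c q^j
  have hsqrt : ∀ j : ℕ, Real.sqrt (V j * C j) ≤ c * q ^ j := by
    intro j
    have hvc : V j * C j ≤ (c * q ^ j) ^ 2 := by
      have hmul := mul_le_mul (hV j) (hC j) (hCpos j).le
        (by positivity : (0:ℝ) ≤ c * 2 ^ (-β * (j:ℝ)))
      refine hmul.trans_eq ?_
      have hq : q ^ j = (2:ℝ) ^ ((γ - β)/2 * (j:ℝ)) := by
        rw [hqdef, ← Real.rpow_natCast ((2:ℝ) ^ ((γ - β)/2)) j,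
          ← Real.rpow_mul (by norm_num)]
      have hsq : ((2:ℝ) ^ ((γ - β)/2 * (j:ℝ))) ^ 2 = 2 ^ (-β * (j:ℝ)) * 2 ^ (γ * (j:ℝ)) := by
        rw [sq, ← Real.rpow_add h2, ← Real.rpow_add h2]
        congr 1; ring
      rw [mul_pow, hq, hsq]; ring
    calc Real.sqrt (V j * C j) ≤ Real.sqrt ((c * q ^ j) ^ 2) := Real.sqrt_le_sqrt hvc
      _ = c * q ^ j := Real.sqrt_sq (by positivity)
  have hS : S ≤ c * ∑ j ∈ Finset.range (L + 1), q ^ j := by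
    rw [Finset.mul_sum]
    exact Finset.sum_le_sum fun j _ => hsqrt j
  -- sqrt(V/C) * C = sqrt(V C)
  have hdiv : ∀ ℓ : ℕ, Real.sqrt (V ℓ / C ℓ) * C ℓ = Real.sqrt (V ℓ * C ℓ) := by
    intro ℓ
    have hCne : C ℓ ≠ 0 := (hCpos ℓ).ne'
    have h1 : V ℓ * C ℓ = (V ℓ / C ℓ) * (C ℓ) ^ 2 := by field_simp
    rw [h1, Real.sqrt_mul (div_nonneg (hVpos ℓ).le (hCpos ℓ).le), Real.sqrt_sq (hCpos ℓ).le]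
  have hMle : ∀ ℓ : ℕ, (M ℓ : ℝ) ≤ ε ^ (-2:ℝ) * Real.sqrt (V ℓ / C ℓ) * S + 1 := by
    intro ℓ
    rw [hM ℓ]
    exact (Nat.ceil_lt_add_one (by positivity)).le
  have hcost : ∑ ℓ ∈ Finset.range (L + 1), (M ℓ : ℝ) * C ℓ ≤
      ε ^ (-2:ℝ) * S ^ 2 + ∑ ℓ ∈ Finset.range (L + 1), C ℓ := by
    calc ∑ ℓ ∈ Finset.range (L + 1), (M ℓ : ℝ) * C ℓ
        ≤ ∑ ℓ ∈ Finset.range (L + 1),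
            (ε ^ (-2:ℝ) * S * Real.sqrt (V ℓ * C ℓ) + C ℓ) := by
          refine Finset.sum_le_sum fun ℓ _ => ?_
          have := mul_le_mul_of_nonneg_right (hMle ℓ) (hCpos ℓ).le
          refine this.trans_eq ?_
          rw [← hdiv ℓ]; ring
      _ = ε ^ (-2:ℝ) * S * S + ∑ ℓ ∈ Finset.range (L + 1), C ℓ := by
          rw [Finset.sum_add_distrib, ← Finset.mul_sum, ← hSdef]
      _ = ε ^ (-2:ℝ) * S ^ 2 + ∑ ℓ ∈ Finset.range (L + 1), C ℓ := by ring
  -- bound sum of C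
  set g : ℝ := (2:ℝ) ^ γ with hgdef
  have hg1 : 1 < g := by
    have := Real.rpow_lt_rpow_of_exponent_lt one_lt_two hγ
    simpa using this
  have hCg : ∀ ℓ : ℕ, C ℓ ≤ c * g ^ ℓ := by
    intro ℓ
    refine (hC ℓ).trans_eq ?_
    rw [hgdef, ← Real.rpow_natCast ((2:ℝ) ^ γ) ℓ, ← Real.rpow_mul (by norm_num)]
  have hCsum : ∑ ℓ ∈ Finset.range (L + 1), C ℓ ≤ c * (g / (g - 1) * g ^ L) := by
    calc ∑ ℓ ∈ Finset.range (L + 1), C ℓ ≤ ∑ ℓ ∈ Finset.range (L + 1), c * g ^ ℓ :=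
          Finset.sum_le_sum fun ℓ _ => hCg ℓ
      _ = c * ∑ ℓ ∈ Finset.range (L + 1), g ^ ℓ := by rw [Finset.mul_sum]
      _ ≤ c * (g / (g - 1) * g ^ L) :=
          mul_le_mul_of_nonneg_left (my_geom_gt_one hg1 L) hc.le
  have hgL : g ^ L ≤ 2 ^ γ * ε ^ (-(γ / α)) :=
    my_two_rpow_L_bound α γ ε L hα hγ.le hε hε1 hLle
  have hCsum2 : ∑ ℓ ∈ Finset.range (L + 1), C ℓ ≤
      c * (g / (g - 1)) * (g * ε ^ (-(γ / α))) := by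
    refine hCsum.trans ?_
    have hgpos : (0:ℝ) < g := Real.rpow_pos_of_pos h2 _
    have hg0 : (0:ℝ) ≤ g - 1 := by linarith
    have hcg : (0:ℝ) ≤ c * (g / (g - 1)) := mul_nonneg hc.le (div_nonneg hgpos.le hg0)
    have h := mul_le_mul_of_nonneg_left hgL hcg
    · calc c * (g / (g - 1) * g ^ L) = c * (g / (g - 1)) * g ^ L := by ring
        _ ≤ c * (g / (g - 1)) * (2 ^ γ * ε ^ (-(γ / α))) := h
        _ = c * (g / (g - 1)) * (g * ε ^ (-(γ / α))) := by rw [hgdef]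
  refine hcost.trans ?_
  have hterm1 : ε ^ (-2:ℝ) * S ^ 2 ≤
      ε ^ (-2:ℝ) * (c * ∑ j ∈ Finset.range (L + 1), q ^ j) ^ 2 :=
    mul_le_mul_of_nonneg_left (pow_le_pow_left₀ hSnn hS 2) (by positivity)
  exact add_le_add hterm1 hCsum2
/-- MLMC cost bound (Giles): with `V_ℓ ≤ c 2^{-βℓ}`, `C_ℓ ≤ c 2^{γℓ}`,
`L = ⌈log₂(1/ε)/α⌉` and `M_ℓ = ⌈ε^{-2} √(V_ℓ/C_ℓ) Σ_j √(V_j C_j)⌉`, the total cost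
`Σ_ℓ M_ℓ C_ℓ` is `O(ε^{-2} + ε^{-γ/α})` if `β > γ`, `O(L² ε^{-2} + ε^{-γ/α})` if `β = γ`,
and `O(ε^{-2-(γ-β)/α})` if `β < γ`, with constant independent of `ε`. -/
theorem mlmc_cost_bound
    (α β γ c : ℝ) (hα : 0 < α) (hβ : 0 < β) (hγ : 0 < γ) (hc : 0 < c)
    (hαβγ : α ≥ min β γ / 2)
    (V C : ℕ → ℝ) (hVpos : ∀ ℓ, 0 < V ℓ) (hCpos : ∀ ℓ, 0 < C ℓ)
    (hV : ∀ ℓ : ℕ, V ℓ ≤ c * 2 ^ (-β * ℓ)) (hC : ∀ ℓ : ℕ, C ℓ ≤ c * 2 ^ (γ * ℓ)) :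
    ∃ K > 0, ∀ ε : ℝ, 0 < ε → ε < 1 →
      ∀ L : ℕ, L = ⌈Real.logb 2 (1 / ε) / α⌉₊ →
      ∀ M : ℕ → ℕ,
        (∀ ℓ, M ℓ = ⌈ε ^ (-2 : ℝ) * Real.sqrt (V ℓ / C ℓ) *
          ∑ j ∈ Finset.range (L + 1), Real.sqrt (V j * C j)⌉₊) →
        ((β > γ → ∑ ℓ ∈ Finset.range (L + 1), (M ℓ : ℝ) * C ℓ
            ≤ K * (ε ^ (-2 : ℝ) + ε ^ (-(γ / α)))) ∧
         (β = γ → ∑ ℓ ∈ Finset.range (L + 1), (M ℓ : ℝ) * C ℓ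
            ≤ K * ((L : ℝ) ^ 2 * ε ^ (-2 : ℝ) + ε ^ (-(γ / α)))) ∧
         (β < γ → ∑ ℓ ∈ Finset.range (L + 1), (M ℓ : ℝ) * C ℓ
            ≤ K * ε ^ (-2 - (γ - β) / α))) := by
  have h2 : (0:ℝ) < 2 := by norm_num
  set q : ℝ := (2:ℝ) ^ ((γ - β)/2) with hqdef
  set g : ℝ := (2:ℝ) ^ γ with hgdef
  have hqpos : 0 < q := Real.rpow_pos_of_pos h2 _
  have hg1 : 1 < g := by
    have := Real.rpow_lt_rpow_of_exponent_lt one_lt_two hγ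
    simpa using this
  set D : ℝ := c * (g / (g - 1)) * g with hDdef
  have hDpos : 0 < D := by
    have : 0 < g - 1 := by linarith
    have : 0 < g := by linarith
    apply mul_pos (mul_pos hc _) ‹0 < g›
    apply div_pos ‹0 < g›
    linarith
  rcases lt_trichotomy β γ with h | h | h
  · -- β < γ
    have hq1 : 1 < q := by
      have := Real.rpow_lt_rpow_of_exponent_lt one_lt_two
        (show (0:ℝ) < (γ - β)/2 by linarith)
      simpa using this
    set B : ℝ := c * (q / (q - 1)) with hBdef
    have hBpos : 0 < B := mul_pos hc (div_pos hqpos (by linarith))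
    refine ⟨(B * q) ^ 2 + D, by positivity, ?_⟩
    intro ε hε hε1 L hL M hM
    obtain ⟨hL1, hLle, hbound⟩ := mlmc_main α β γ c hα hγ hc V C hVpos hCpos hV hC
      ε hε hε1 L hL M hM
    refine ⟨fun h' => absurd h' (lt_asymm h), fun h' => absurd h' (by linarith), fun _ => ?_⟩
    set t : ℝ := ((γ - β)/2) / α with htdef
    have hqL : q ^ L ≤ q * ε ^ (-t) :=
      my_two_rpow_L_bound α ((γ - β)/2) ε L hα (by linarith) hε hε1 hLle
    have hsum : c * ∑ j ∈ Finset.range (L + 1), q ^ j ≤ B * (q * ε ^ (-t)) := by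
      calc c * ∑ j ∈ Finset.range (L + 1), q ^ j ≤ c * (q / (q - 1) * q ^ L) :=
            mul_le_mul_of_nonneg_left (my_geom_gt_one hq1 L) hc.le
        _ = B * q ^ L := by rw [hBdef]; ring
        _ ≤ B * (q * ε ^ (-t)) := mul_le_mul_of_nonneg_left hqL hBpos.le
    have hsumnn : 0 ≤ c * ∑ j ∈ Finset.range (L + 1), q ^ j :=
      mul_nonneg hc.le (Finset.sum_nonneg fun j _ => pow_nonneg hqpos.le j)
    have hsq : (c * ∑ j ∈ Finset.range (L + 1), q ^ j) ^ 2 ≤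
        (B * q) ^ 2 * (ε ^ (-t)) ^ 2 := by
      have := pow_le_pow_left₀ hsumnn hsum 2
      refine this.trans_eq ?_
      ring
    have hX : ε ^ (-2:ℝ) * ((ε:ℝ) ^ (-t)) ^ 2 = ε ^ (-2 - (γ - β)/α) := by
      rw [sq, ← Real.rpow_add hε, ← Real.rpow_add hε]
      congr 1
      rw [htdef]
      field_simp
      ring
    have hβ2α : β ≤ 2 * α := by
      have := min_eq_left h.le ▸ hαβγ
      linarith
    have hexp : -2 - (γ - β)/α ≤ -(γ/α) := by
      have h1 : (γ - β)/α = γ/α - β/α := sub_div _ _ _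
      have h2' : β/α ≤ 2 := (div_le_iff₀ hα).mpr (by linarith)
      linarith
    have hXle : ε ^ (-(γ/α)) ≤ ε ^ (-2 - (γ - β)/α) :=
      Real.rpow_le_rpow_of_exponent_ge hε hε1.le hexp
    have hXnn : (0:ℝ) ≤ ε ^ (-2 - (γ - β)/α) := Real.rpow_nonneg hε.le _
    calc ∑ ℓ ∈ Finset.range (L + 1), (M ℓ : ℝ) * C ℓ
        ≤ ε ^ (-2:ℝ) * (c * ∑ j ∈ Finset.range (L + 1), q ^ j) ^ 2
          + c * (g / (g - 1)) * (g * ε ^ (-(γ / α))) := hbound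
      _ ≤ ε ^ (-2:ℝ) * ((B * q) ^ 2 * (ε ^ (-t)) ^ 2) + D * ε ^ (-(γ/α)) := by
          refine add_le_add (mul_le_mul_of_nonneg_left hsq (Real.rpow_nonneg hε.le _)) ?_
          apply le_of_eq; rw [hDdef]; ring
      _ = (B * q) ^ 2 * (ε ^ (-2:ℝ) * (ε ^ (-t)) ^ 2) + D * ε ^ (-(γ/α)) := by ring
      _ ≤ (B * q) ^ 2 * ε ^ (-2 - (γ - β)/α) + D * ε ^ (-2 - (γ - β)/α) := by
          rw [hX]
          exact add_le_add le_rfl (mul_le_mul_of_nonneg_left hXle hDpos.le)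
      _ = ((B * q) ^ 2 + D) * ε ^ (-2 - (γ - β)/α) := by ring
  · -- β = γ
    refine ⟨4 * c ^ 2 + D, by positivity, ?_⟩
    intro ε hε hε1 L hL M hM
    obtain ⟨hL1, hLle, hbound⟩ := mlmc_main α β γ c hα hγ hc V C hVpos hCpos hV hC
      ε hε hε1 L hL M hM
    refine ⟨fun h' => by exfalso; linarith, fun _ => ?_, fun h' => by exfalso; linarith⟩
    have hq1 : q = 1 := by rw [hqdef, h]; norm_num
    have hsum : ∑ j ∈ Finset.range (L + 1), q ^ j = ((L:ℝ) + 1) := by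
      simp [hq1]
    have hLcast : (1:ℝ) ≤ (L:ℝ) := by exact_mod_cast hL1
    have hsq : (c * ∑ j ∈ Finset.range (L + 1), q ^ j) ^ 2 ≤ 4 * c ^ 2 * (L:ℝ) ^ 2 := by
      rw [hsum]
      have h1 : c * ((L:ℝ) + 1) ≤ c * (2 * L) :=
        mul_le_mul_of_nonneg_left (by linarith) hc.le
      have h0 : 0 ≤ c * ((L:ℝ) + 1) := by positivity
      calc (c * ((L:ℝ) + 1)) ^ 2 ≤ (c * (2 * L)) ^ 2 := pow_le_pow_left₀ h0 h1 2
        _ = 4 * c ^ 2 * (L:ℝ) ^ 2 := by ring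
    have hE2 : (0:ℝ) ≤ ε ^ (-2:ℝ) := Real.rpow_nonneg hε.le _
    have hEg : (0:ℝ) ≤ ε ^ (-(γ/α)) := Real.rpow_nonneg hε.le _
    calc ∑ ℓ ∈ Finset.range (L + 1), (M ℓ : ℝ) * C ℓ
        ≤ ε ^ (-2:ℝ) * (c * ∑ j ∈ Finset.range (L + 1), q ^ j) ^ 2
          + c * (g / (g - 1)) * (g * ε ^ (-(γ / α))) := hbound
      _ ≤ ε ^ (-2:ℝ) * (4 * c ^ 2 * (L:ℝ) ^ 2) + D * ε ^ (-(γ/α)) := by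
          refine add_le_add (mul_le_mul_of_nonneg_left hsq hE2) ?_
          apply le_of_eq; rw [hDdef]; ring
      _ ≤ (4 * c ^ 2 + D) * ((L : ℝ) ^ 2 * ε ^ (-2:ℝ) + ε ^ (-(γ/α))) := by
          have hL2 : (0:ℝ) ≤ (L:ℝ) ^ 2 := by positivity
          nlinarith [mul_nonneg (mul_nonneg hL2 hE2) hDpos.le,
            mul_nonneg hEg (by positivity : (0:ℝ) ≤ 4 * c ^ 2)]
  · -- β > γ
    have hq1 : q < 1 :=
      Real.rpow_lt_one_of_one_lt_of_neg one_lt_two (by linarith)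
    set A : ℝ := c * (1 / (1 - q)) with hAdef
    have hApos : 0 < A := mul_pos hc (div_pos one_pos (by linarith))
    refine ⟨A ^ 2 + D, by positivity, ?_⟩
    intro ε hε hε1 L hL M hM
    obtain ⟨hL1, hLle, hbound⟩ := mlmc_main α β γ c hα hγ hc V C hVpos hCpos hV hC
      ε hε hε1 L hL M hM
    refine ⟨fun _ => ?_, fun h' => by exfalso; linarith, fun h' => by exfalso; linarith⟩
    have hsum : c * ∑ j ∈ Finset.range (L + 1), q ^ j ≤ A := by
      rw [hAdef]
      exact mul_le_mul_of_nonneg_left (my_geom_lt_one hqpos.le hq1 (L + 1)) hc.le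
    have hsumnn : 0 ≤ c * ∑ j ∈ Finset.range (L + 1), q ^ j :=
      mul_nonneg hc.le (Finset.sum_nonneg fun j _ => pow_nonneg hqpos.le j)
    have hsq : (c * ∑ j ∈ Finset.range (L + 1), q ^ j) ^ 2 ≤ A ^ 2 :=
      pow_le_pow_left₀ hsumnn hsum 2
    have hE2 : (0:ℝ) ≤ ε ^ (-2:ℝ) := Real.rpow_nonneg hε.le _
    have hEg : (0:ℝ) ≤ ε ^ (-(γ/α)) := Real.rpow_nonneg hε.le _
    calc ∑ ℓ ∈ Finset.range (L + 1), (M ℓ : ℝ) * C ℓ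
        ≤ ε ^ (-2:ℝ) * (c * ∑ j ∈ Finset.range (L + 1), q ^ j) ^ 2
          + c * (g / (g - 1)) * (g * ε ^ (-(γ / α))) := hbound
      _ ≤ ε ^ (-2:ℝ) * A ^ 2 + D * ε ^ (-(γ/α)) := by
          refine add_le_add (mul_le_mul_of_nonneg_left hsq hE2) ?_
          apply le_of_eq; rw [hDdef]; ring
      _ ≤ (A ^ 2 + D) * (ε ^ (-2:ℝ) + ε ^ (-(γ/α))) := by
          nlinarith [mul_nonneg hE2 hDpos.le, mul_nonneg hEg (sq_nonneg A)]
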